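/- The linear map τ : Y → X determined by ⟨τ(y), x⟩_A = φ(⟨y, x⟩_C) is a right B-module map: τ(y·b) = τ(y)·b for all b ∈ B, y ∈ Y. -/

import Mathlib

/-- A pair `(X, Y)` implementing a strong Morita equivalence of unital inclusions
`A ⊆ C` and `B ⊆ D` of unital C*-algebras: `Y` is a `C`–`D`-equivalence bimodule and
`X` is a closed subspace of `Y` which is an `A`–`B`-equivalence bimodule with the
restricted actions and inner products. -/
structure MoritaPair
    (A : Type*) [NormedRing A] [StarRing A] [CStarRing A] [NormedAlgebra ℂ A]
      [CompleteSpace A] [StarModule ℂ A]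
    (C : Type*) [NormedRing C] [StarRing C] [CStarRing C] [NormedAlgebra ℂ C]
      [CompleteSpace C] [StarModule ℂ C]
    (B : Type*) [NormedRing B] [StarRing B] [CStarRing B] [NormedAlgebra ℂ B]
      [CompleteSpace B] [StarModule ℂ B]
    (D : Type*) [NormedRing D] [StarRing D] [CStarRing D] [NormedAlgebra ℂ D]
      [CompleteSpace D] [StarModule ℂ D]
    (X : Type*) [NormedAddCommGroup X] [NormedSpace ℂ X]
    (Y : Type*) [NormedAddCommGroup Y] [NormedSpace ℂ Y] [CompleteSpace Y] where
  /-- the unital isometric *-embedding of `A` into `C` -/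
  ιA : A →⋆ₐ[ℂ] C
  /-- the unital isometric *-embedding of `B` into `D` -/
  ιB : B →⋆ₐ[ℂ] D
  ιA_isometry : Isometry ιA
  ιB_isometry : Isometry ιB
  /-- the inclusion of the closed subspace `X` into `Y` -/
  incl : X →ₗ[ℂ] Y
  incl_norm : ∀ x, ‖incl x‖ = ‖x‖
  incl_closed : IsClosed (Set.range incl)
  /-- left action of `C` on `Y` -/
  lC : C → Y → Y
  lC_one : ∀ y, lC 1 y = y
  lC_mul : ∀ c c' y, lC (c * c') y = lC c (lC c' y)
  lC_add_right : ∀ c y y', lC c (y + y') = lC c y + lC c y'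
  lC_add_left : ∀ c c' y, lC (c + c') y = lC c y + lC c' y
  lC_smul : ∀ (z : ℂ) c y, lC (z • c) y = z • lC c y
  /-- right action of `D` on `Y` -/
  rD : Y → D → Y
  rD_one : ∀ y, rD y 1 = y
  rD_mul : ∀ y d d', rD y (d * d') = rD (rD y d) d'
  rD_add_left : ∀ y y' d, rD (y + y') d = rD y d + rD y' d
  rD_add_right : ∀ y d d', rD y (d + d') = rD y d + rD y d'
  rD_smul : ∀ (z : ℂ) y d, rD y (z • d) = z • rD y d
  smul_assoc : ∀ c y d, rD (lC c y) d = lC c (rD y d)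
  /-- the left `C`-valued inner product on `Y` -/
  innC : Y → Y → C
  innC_add_left : ∀ y y' z, innC (y + y') z = innC y z + innC y' z
  innC_star : ∀ y z, star (innC y z) = innC z y
  innC_lC : ∀ c y z, innC (lC c y) z = c * innC y z
  innC_norm : ∀ y, ‖innC y y‖ = ‖y‖ ^ 2
  /-- the right `D`-valued inner product on `Y` -/
  innD : Y → Y → D
  innD_add_right : ∀ y z z', innD y (z + z') = innD y z + innD y z'
  innD_star : ∀ y z, star (innD y z) = innD z y
  innD_rD : ∀ y z d, innD y (rD z d) = innD y z * d
  innD_norm : ∀ y, ‖innD y y‖ = ‖y‖ ^ 2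
  imprimitivity : ∀ y z w, lC (innC y z) w = rD y (innD z w)
  innC_full : (Submodule.span ℂ {c : C | ∃ y z, innC y z = c}).topologicalClosure = ⊤
  innD_full : (Submodule.span ℂ {d : D | ∃ y z, innD y z = d}).topologicalClosure = ⊤
  /-- left action of `A` on `X`, the restriction of the `C`-action -/
  lA : A → X → X
  lA_compat : ∀ a x, incl (lA a x) = lC (ιA a) (incl x)
  /-- right action of `B` on `X`, the restriction of the `D`-action -/
  rB : X → B → X
  rB_compat : ∀ x b, incl (rB x b) = rD (incl x) (ιB b)
  /-- the left `A`-valued inner product on `X`, the restriction of `innC` -/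
  innA : X → X → A
  innA_compat : ∀ x z, ιA (innA x z) = innC (incl x) (incl z)
  /-- the right `B`-valued inner product on `X`, the restriction of `innD` -/
  innB : X → X → B
  innB_compat : ∀ x z, ιB (innB x z) = innD (incl x) (incl z)
  innA_full : (Submodule.span ℂ {a : A | ∃ x z, innA x z = a}).topologicalClosure = ⊤
  innB_full : (Submodule.span ℂ {b : B | ∃ x z, innB x z = b}).topologicalClosure = ⊤

variable {A : Type*} [NormedRing A] [StarRing A] [CStarRing A] [NormedAlgebra ℂ A]
  [CompleteSpace A] [StarModule ℂ A]
variable {C : Type*} [NormedRing C] [StarRing C] [CStarRing C] [NormedAlgebra ℂ C]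
  [CompleteSpace C] [StarModule ℂ C]
variable {B : Type*} [NormedRing B] [StarRing B] [CStarRing B] [NormedAlgebra ℂ B]
  [CompleteSpace B] [StarModule ℂ B]
variable {D : Type*} [NormedRing D] [StarRing D] [CStarRing D] [NormedAlgebra ℂ D]
  [CompleteSpace D] [StarModule ℂ D]
variable {X : Type*} [NormedAddCommGroup X] [NormedSpace ℂ X]
variable {Y : Type*} [NormedAddCommGroup Y] [NormedSpace ℂ Y] [CompleteSpace Y]

/-- the map `τ` determined by `⟨τ(y), x⟩_A = φ(⟨y, x⟩_C)` is a right
`B`-module map: `τ(y·b) = τ(y)·b`. -/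
theorem stmt4 (M : MoritaPair A C B D X Y) (φ : C →L[ℂ] A)
    (hφ : ∀ (a : A) (c : C), φ (M.ιA a * c) = a * φ c ∧ φ (c * M.ιA a) = φ c * a)
    (τ : Y →ₗ[ℂ] X)
    (hτ : ∀ (y : Y) (x : X), M.innA (τ y) x = φ (M.innC y (M.incl x))) :
    ∀ (b : B) (y : Y), τ (M.rD y (M.ιB b)) = M.rB (τ y) b := by
  intro b y
  -- basic linearity facts
  have innC_zero_left : ∀ z : Y, M.innC 0 z = 0 := by
    intro z
    have h := M.innC_add_left 0 0 z
    rw [zero_add] at h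
    exact (left_eq_add.mp h)
  have innC_sub_left : ∀ (u v z : Y), M.innC (u - v) z = M.innC u z - M.innC v z := by
    intro u v z
    have h := M.innC_add_left (u - v) v z
    rw [sub_add_cancel] at h
    rw [h]; abel
  have lC_sub_left : ∀ (c c' : C) (u : Y), M.lC (c - c') u = M.lC c u - M.lC c' u := by
    intro c c' u
    have h := M.lC_add_left (c - c') c' u
    rw [sub_add_cancel] at h
    rw [h]; abel
  -- if `lC c u = 0` for all `u`, then `c = 0`
  have zero_of_lC : ∀ c : C, (∀ u : Y, M.lC c u = 0) → c = 0 := by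
    intro c hc
    have hmul : ∀ s : C, s ∈ {c' : C | ∃ y z, M.innC y z = c'} → c * s = 0 := by
      rintro s ⟨u, z, rfl⟩
      rw [← M.innC_lC, hc, innC_zero_left]
    let f : C →L[ℂ] C := ContinuousLinearMap.mul ℂ C c
    have hle : Submodule.span ℂ {c' : C | ∃ y z, M.innC y z = c'} ≤ f.ker := by
      rw [Submodule.span_le]
      intro s hs
      exact hmul s hs
    have hcl : (Submodule.span ℂ {c' : C | ∃ y z, M.innC y z = c'}).topologicalClosure
        ≤ f.ker :=
      Submodule.topologicalClosure_minimal _ hle (ContinuousLinearMap.isClosed_ker f)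
    rw [M.innC_full] at hcl
    have h1 : (1 : C) ∈ f.ker := hcl trivial
    have : c * 1 = 0 := h1
    simpa using this
  -- key: ⟨y·d, w⟩_C = ⟨y, w·d*⟩_C
  have key : ∀ (d : D) (y' w : Y), M.innC (M.rD y' d) w = M.innC y' (M.rD w (star d)) := by
    intro d y' w
    have hu : ∀ u : Y, M.lC (M.innC (M.rD y' d) w) u = M.lC (M.innC y' (M.rD w (star d))) u := by
      intro u
      rw [M.imprimitivity, M.imprimitivity]
      have hd : M.innD (M.rD w (star d)) u = d * M.innD w u := by
        rw [← M.innD_star u (M.rD w (star d)), M.innD_rD, star_mul, star_star, M.innD_star]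
      rw [hd, ← M.rD_mul]
    have h0 : ∀ u : Y, M.lC (M.innC (M.rD y' d) w - M.innC y' (M.rD w (star d))) u = 0 := by
      intro u
      rw [lC_sub_left, hu, sub_self]
    have := zero_of_lC _ h0
    exact sub_eq_zero.mp this
  -- main computation: both sides have equal C-inner products against all of X
  have h1 : ∀ z : X,
      M.innC (M.incl (τ (M.rD y (M.ιB b)))) (M.incl z)
        = M.innC (M.incl (M.rB (τ y) b)) (M.incl z) := by
    intro z
    have lhs : M.innC (M.incl (τ (M.rD y (M.ιB b)))) (M.incl z)
        = M.ιA (φ (M.innC (M.rD y (M.ιB b)) (M.incl z))) := by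
      rw [← M.innA_compat, hτ]
    have rhs : M.innC (M.incl (M.rB (τ y) b)) (M.incl z)
        = M.ιA (φ (M.innC (M.rD y (M.ιB b)) (M.incl z))) := by
      rw [M.rB_compat, key, ← map_star, ← M.rB_compat, ← M.innA_compat, hτ,
        M.rB_compat, map_star, ← key]
    rw [lhs, rhs]
  -- deduce the difference is zero
  set w : X := τ (M.rD y (M.ιB b)) - M.rB (τ y) b with hw
  have hinclw : ∀ z : X, M.innC (M.incl w) (M.incl z) = 0 := by
    intro z
    rw [hw, map_sub, innC_sub_left, h1, sub_self]
  have hn : ‖M.incl w‖ ^ 2 = 0 := by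
    rw [← M.innC_norm, hinclw w, norm_zero]
  have hiw : M.incl w = 0 := by
    have : ‖M.incl w‖ = 0 := by
      nlinarith [norm_nonneg (M.incl w)]
    exact norm_eq_zero.mp this
  have hwz : w = 0 := by
    have : ‖w‖ = 0 := by rw [← M.incl_norm, hiw, norm_zero]
    exact norm_eq_zero.mp this
  exact sub_eq_zero.mp hwz
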